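/- arXiv:1604.00473 — 2 statements merged into one kernel-verified Lean document; each statement's English description precedes it below -/
import Mathlib

section
/- Inversion of the Heisenberg group satisfies d_H(I(p), I(p')) = d_H(p, p') / (d_H(p, o) · d_H(o, p')) for all points p = (ζ, v), p' = (ζ', v') in ℂ × ℝ, both different from o = (0, 0). -/
open Complex

/-- The Cygan metric on `ℂ × ℝ × ℝ` (third coordinate is the height `u ≥ 0`). -/
noncomputable def cygan (p q : ℂ × ℝ × ℝ) : ℝ :=
  Real.sqrt (Norm.norm
    ((((Norm.norm (p.1 - q.1)) ^ 2 + |p.2.2 - q.2.2| : ℝ) : ℂ)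
      - Complex.I * (p.2.1 : ℂ) + Complex.I * (q.2.1 : ℂ)
      - 2 * Complex.I * (((p.1 * (starRingEnd ℂ) q.1).im : ℝ) : ℂ)))

/-- Heisenberg group multiplication on `ℂ × ℝ`. -/
noncomputable def hmul (p q : ℂ × ℝ) : ℂ × ℝ :=
  (p.1 + q.1, p.2 + q.2 + 2 * ((starRingEnd ℂ) q.1 * p.1).im)

/-- The Korányi gauge on `ℂ × ℝ`. -/
noncomputable def hgauge (p : ℂ × ℝ) : ℝ :=
  Real.sqrt (Norm.norm ((-((Norm.norm p.1) ^ 2 : ℝ) : ℂ) + Complex.I * (p.2 : ℂ)))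

/-- The Heisenberg (Korányi–Cygan) metric on `ℂ × ℝ`. -/
noncomputable def hdist (p q : ℂ × ℝ) : ℝ :=
  hgauge (hmul (-p.1, -p.2) q)

/-- Heisenberg inversion on `ℂ × ℝ`. -/
noncomputable def hinv (p : ℂ × ℝ) : ℂ × ℝ :=
  ((p.1 / ((-((Norm.norm p.1) ^ 2 : ℝ) : ℂ) + Complex.I * (p.2 : ℂ))),
    -p.2 / (Norm.norm ((-((Norm.norm p.1) ^ 2 : ℝ) : ℂ) + Complex.I * (p.2 : ℂ))) ^ 2)

/-- Cygan inversion on `ℂ × ℝ × ℝ`. -/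
noncomputable def cinv (p : ℂ × ℝ × ℝ) : ℂ × ℝ × ℝ :=
  (p.1 / ((-((Norm.norm p.1) ^ 2 : ℝ) : ℂ) + Complex.I * (p.2.1 : ℂ) - (p.2.2 : ℂ)),
    -p.2.1 / (Norm.norm ((-((Norm.norm p.1) ^ 2 : ℝ) : ℂ) + Complex.I * (p.2.1 : ℂ) - (p.2.2 : ℂ))) ^ 2,
    p.2.2 / (Norm.norm ((-((Norm.norm p.1) ^ 2 : ℝ) : ℂ) + Complex.I * (p.2.1 : ℂ) - (p.2.2 : ℂ))) ^ 2)

noncomputable def hw (p : ℂ × ℝ) : ℂ :=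
  (-((Norm.norm p.1) ^ 2 : ℝ) : ℂ) + Complex.I * (p.2 : ℂ)

lemma hw_ne (p : ℂ × ℝ) (hp : p ≠ (0, 0)) : hw p ≠ 0 := by
  intro h
  apply hp
  rw [Complex.ext_iff] at h
  simp [hw, ← Complex.ofReal_pow] at h
  obtain ⟨h1, h2⟩ := h
  exact Prod.ext h1 h2

lemma hdist_eq (p q : ℂ × ℝ) :
    hdist p q = Real.sqrt (Norm.norm
      ((starRingEnd ℂ) (hw p) + hw q + 2 * (starRingEnd ℂ) p.1 * q.1)) := by
  unfold hdist hgauge hmul hw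
  congr 2
  apply Complex.ext <;>
    simp [Complex.sq_norm, Complex.normSq_apply, Complex.normSq_sub] <;> ring

lemma hw_hinv (p : ℂ × ℝ) (h : hw p ≠ 0) : hw (hinv p) = (hw p)⁻¹ := by
  have habs : (Norm.norm (hw p) : ℝ) ≠ 0 := by simpa using h
  unfold hinv
  show ((-((Norm.norm (p.1 / hw p)) ^ 2 : ℝ) : ℂ)
      + Complex.I * ((-p.2 / (Norm.norm (hw p)) ^ 2 : ℝ) : ℂ)) = (hw p)⁻¹
  rw [norm_div, Complex.inv_def]
  have hn : ((Complex.normSq (hw p) : ℝ) : ℂ) ≠ 0 := by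
    simpa [Complex.normSq_eq_norm_sq] using habs
  have hsq : ((Norm.norm (hw p)) ^ 2 : ℝ) = Complex.normSq (hw p) := Complex.sq_norm _
  rw [div_pow, hsq]
  have hc : (starRingEnd ℂ) (hw p) = ((-((Norm.norm p.1) ^ 2 : ℝ) : ℂ)) - Complex.I * (p.2 : ℂ) := by
    unfold hw
    apply Complex.ext
    · simp
    · simp; ring
  rw [hc]
  push_cast
  field_simp
  ring

lemma hw_zero : hw (0 : ℂ × ℝ) = 0 := by simp [hw]

lemma hdist_zero_right (p : ℂ × ℝ) : hdist p (0, 0) = Real.sqrt (Norm.norm (hw p)) := by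
  rw [hdist_eq]
  simp [Prod.mk_zero_zero, hw_zero, Complex.norm_conj]

lemma hdist_zero_left (p : ℂ × ℝ) : hdist (0, 0) p = Real.sqrt (Norm.norm (hw p)) := by
  rw [hdist_eq]
  simp [Prod.mk_zero_zero, hw_zero]

theorem hdist_hinv (p p' : ℂ × ℝ) (hp : p ≠ (0, 0)) (hp' : p' ≠ (0, 0)) :
    hdist (hinv p) (hinv p')
      = hdist p p' / (hdist p (0, 0) * hdist (0, 0) p') := by
  have h1 : hw p ≠ 0 := hw_ne p hp
  have h2 : hw p' ≠ 0 := hw_ne p' hp'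
  have h1c : (starRingEnd ℂ) (hw p) ≠ 0 := by simpa using h1
  have hfst : (hinv p).1 = p.1 / hw p := rfl
  have hfst' : (hinv p').1 = p'.1 / hw p' := rfl
  rw [hdist_eq, hdist_eq, hdist_zero_right, hdist_zero_left,
    hw_hinv p h1, hw_hinv p' h2, hfst, hfst']
  have key : (starRingEnd ℂ) (hw p)⁻¹ + (hw p')⁻¹
      + 2 * (starRingEnd ℂ) (p.1 / hw p) * (p'.1 / hw p')
      = ((starRingEnd ℂ) (hw p) + hw p' + 2 * (starRingEnd ℂ) p.1 * p'.1)
        / ((starRingEnd ℂ) (hw p) * hw p') := by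
    rw [map_div₀, map_inv₀]
    field_simp
    ring
  rw [key, norm_div, norm_mul, Complex.norm_conj]
  rw [Real.sqrt_div (norm_nonneg _), Real.sqrt_mul (norm_nonneg _)]
end

section
/- The Cygan inversion I is an involution: I(I(ζ, v, u)) = (ζ, v, u) for every (ζ, v, u) in ℂ × ℝ × ℝ≥0 with (ζ, v, u) ≠ (0, 0, 0). -/
open Complex

theorem cinv_involution (p : ℂ × ℝ × ℝ) (hp0 : 0 ≤ p.2.2)
    (hp : p ≠ (0, 0, 0)) : cinv (cinv p) = p := by
  obtain ⟨ζ, v, u⟩ := p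
  simp only [] at hp0
  set w : ℂ := (-((Norm.norm ζ) ^ 2 : ℝ) : ℂ) + Complex.I * (v : ℂ) - (u : ℂ) with hw_def
  have hwre : w.re = -(Norm.norm ζ)^2 - u := by simp [hw_def, ← Complex.ofReal_pow]
  have hwim : w.im = v := by simp [hw_def, ← Complex.ofReal_pow]
  have hw : w ≠ 0 := by
    intro h
    apply hp
    have h1 : -(Norm.norm ζ)^2 - u = 0 := by rw [← hwre, h]; simp
    have h2 : v = 0 := by rw [← hwim, h]; simp
    have hz : Norm.norm ζ = 0 ∧ u = 0 := by
      constructor <;> nlinarith [norm_nonneg ζ, sq_nonneg (Norm.norm ζ)]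
    have : ζ = 0 := by simpa using hz.1
    simp [this, h2, hz.2, Prod.ext_iff]
  have hconj : (starRingEnd ℂ) w = (-((Norm.norm ζ)^2 : ℝ) : ℂ) - Complex.I * v - u := by
    rw [hw_def]
    simp [map_sub, map_add, map_mul, Complex.conj_ofReal, Complex.conj_I]
    ring
  have hns : ((Norm.norm w ^ 2 : ℝ) : ℂ) = w * (starRingEnd ℂ) w := by
    rw [Complex.sq_norm, Complex.mul_conj]
  have habsw : Norm.norm w ≠ 0 := by simpa using hw
  -- inner point
  have key : (-((Norm.norm (ζ / w)) ^ 2 : ℝ) : ℂ)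
      + Complex.I * ((-v / (Norm.norm w) ^ 2 : ℝ) : ℂ)
      - ((u / (Norm.norm w) ^ 2 : ℝ) : ℂ) = w⁻¹ := by
    rw [norm_div]
    push_cast
    rw [div_pow]
    have habswC : ((Norm.norm w : ℝ) : ℂ) ≠ 0 := by exact_mod_cast habsw
    rw [Complex.inv_def, Complex.normSq_eq_norm_sq, hconj]
    push_cast
    field_simp
    ring
  show cinv (cinv (ζ, v, u)) = (ζ, v, u)
  simp only [cinv, ← hw_def]
  rw [key, norm_inv]
  refine Prod.ext ?_ (Prod.ext ?_ ?_)
  · simp [div_inv_eq_mul, hw]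
  · field_simp
  · field_simp
end
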